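/- Let B be an n×n real symmetric positive definite matrix, γ ∈ (0,1), and x ∈ ℝⁿ a nonzero vector with Bx ≠ μ(x)x. Let y ∈ ℝⁿ satisfy (y, Bx − y) = 0 and ‖Bx − y‖ = γ‖Bx − μ(x)x‖. Then there exists a real symmetric matrix T with ‖I − T‖ ≤ γ (operator norm) such that Bx − (I − T)(Bx − μ(x)x) = y; in particular T can be chosen of the form T = I − γH for a Householder reflection H. -/

import Mathlib

noncomputable section

/-- Real matrix-vector multiplication viewed as a map on `EuclideanSpace`. -/
def mulVecEr {n : ℕ} (M : Matrix (Fin n) (Fin n) ℝ) (x : EuclideanSpace ℝ (Fin n)) :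
    EuclideanSpace ℝ (Fin n) :=
  (WithLp.equiv 2 (Fin n → ℝ)).symm (M.mulVec (WithLp.equiv 2 (Fin n → ℝ) x))

/-- The Rayleigh quotient `μ(x) = (x,Bx)/(x,x)`. -/
def RQr {n : ℕ} (B : Matrix (Fin n) (Fin n) ℝ) (x : EuclideanSpace ℝ (Fin n)) : ℝ :=
  (inner ℝ x (mulVecEr B x) : ℝ) / ‖x‖ ^ 2

/-- The Householder reflection `H = I - 2vvᵀ/(v,v)` associated with a vector `v`. -/
def householder {n : ℕ} (v : Fin n → ℝ) : Matrix (Fin n) (Fin n) ℝ :=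
  1 - (2 / dotProduct v v) • Matrix.vecMulVec v v

lemma inner_eq_dot {n : ℕ} (a b : EuclideanSpace ℝ (Fin n)) :
    (inner ℝ a b : ℝ) = dotProduct (WithLp.equiv 2 (Fin n → ℝ) a)
      (WithLp.equiv 2 (Fin n → ℝ) b) := by
  simp [PiLp.inner_apply, dotProduct, RCLike.inner_apply, mul_comm]

lemma norm_sq_eq_dot {n : ℕ} (a : EuclideanSpace ℝ (Fin n)) :
    ‖a‖ ^ 2 = dotProduct (WithLp.equiv 2 (Fin n → ℝ) a)
      (WithLp.equiv 2 (Fin n → ℝ) a) := by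
  rw [← inner_eq_dot, real_inner_self_eq_norm_sq]

lemma householder_isSymm {n : ℕ} (v : Fin n → ℝ) : (householder v).IsSymm := by
  unfold householder Matrix.IsSymm
  rw [Matrix.transpose_sub, Matrix.transpose_one, Matrix.transpose_smul]
  congr 1
  ext i j
  simp [Matrix.vecMulVec_apply, mul_comm]

lemma householder_mulVec {n : ℕ} (v z : Fin n → ℝ) :
    (householder v).mulVec z
      = z - ((2 * dotProduct v z) / dotProduct v v) • v := by
  funext i
  simp only [householder, Matrix.sub_mulVec, Matrix.smul_mulVec, Matrix.one_mulVec,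
    Pi.sub_apply, Pi.smul_apply, smul_eq_mul]
  congr 1
  have : (Matrix.vecMulVec v v).mulVec z i = v i * dotProduct v z := by
    simp [Matrix.mulVec, Matrix.vecMulVec_apply, dotProduct, Finset.mul_sum, mul_assoc]
  rw [this]
  ring

lemma householder_dot_self {n : ℕ} {v : Fin n → ℝ} (hv : v ≠ 0) (z : Fin n → ℝ) :
    dotProduct ((householder v).mulVec z) ((householder v).mulVec z)
      = dotProduct z z := by
  have hd : dotProduct v v ≠ 0 :=
    fun h => hv (dotProduct_self_eq_zero.mp h)
  rw [householder_mulVec]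
  rw [sub_dotProduct, dotProduct_sub, dotProduct_sub,
    smul_dotProduct, dotProduct_smul, smul_dotProduct,
    dotProduct_comm v z]
  simp only [smul_eq_mul, dotProduct_smul]
  field_simp
  ring

lemma householder_norm {n : ℕ} {v : Fin n → ℝ} (hv : v ≠ 0)
    (z : EuclideanSpace ℝ (Fin n)) : ‖mulVecEr (householder v) z‖ = ‖z‖ := by
  have h2 : ‖mulVecEr (householder v) z‖ ^ 2 = ‖z‖ ^ 2 := by
    rw [norm_sq_eq_dot, norm_sq_eq_dot]
    have : WithLp.equiv 2 (Fin n → ℝ) (mulVecEr (householder v) z)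
        = (householder v).mulVec (WithLp.equiv 2 (Fin n → ℝ) z) := by
      simp [mulVecEr]
    rw [this, householder_dot_self hv]
  calc ‖mulVecEr (householder v) z‖
      = Real.sqrt (‖mulVecEr (householder v) z‖ ^ 2) := (Real.sqrt_sq (norm_nonneg _)).symm
    _ = Real.sqrt (‖z‖ ^ 2) := by rw [h2]
    _ = ‖z‖ := Real.sqrt_sq (norm_nonneg _)

lemma householder_reflect {n : ℕ} {a b : Fin n → ℝ} (hab : a ≠ b)
    (hn : dotProduct a a = dotProduct b b) :
    (householder (a - b)).mulVec a = b := by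
  have hv : a - b ≠ 0 := sub_ne_zero.mpr hab
  have hd : dotProduct (a - b) (a - b) ≠ 0 :=
    fun h => hv (dotProduct_self_eq_zero.mp h)
  rw [householder_mulVec]
  have hcoef : 2 * dotProduct (a - b) a / dotProduct (a - b) (a - b) = 1 := by
    rw [div_eq_one_iff_eq hd]
    rw [sub_dotProduct, sub_dotProduct, dotProduct_sub,
      dotProduct_sub, dotProduct_comm b a]
    rw [← hn]; ring
  rw [hcoef, one_smul]
  abel

lemma mulVecEr_smul {n : ℕ} (M : Matrix (Fin n) (Fin n) ℝ) (c : ℝ)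
    (z : EuclideanSpace ℝ (Fin n)) : mulVecEr (c • M) z = c • mulVecEr M z := by
  simp [mulVecEr, Matrix.smul_mulVec]

/-- Any point `y` on the cone boundary (suitably scaled) is realized by an admissible
preconditioner: there is a symmetric `T` with `‖I - T‖ ≤ γ`, of the form `I - γH` for a
Householder reflection `H`, such that `Bx - (I - T)(Bx - μ(x)x) = y`. -/
theorem preconditioner_realizing_cone_point
    {n : ℕ} (B : Matrix (Fin n) (Fin n) ℝ) (hB : B.PosDef)
    (γ : ℝ) (hγ0 : 0 < γ) (hγ1 : γ < 1)
    (x : EuclideanSpace ℝ (Fin n)) (hx : x ≠ 0)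
    (hres : mulVecEr B x ≠ RQr B x • x)
    (y : EuclideanSpace ℝ (Fin n))
    (horth : (inner ℝ y (mulVecEr B x - y) : ℝ) = 0)
    (hlen : ‖mulVecEr B x - y‖ = γ * ‖mulVecEr B x - RQr B x • x‖) :
    ∃ T : Matrix (Fin n) (Fin n) ℝ, T.IsSymm ∧
      (∀ z : EuclideanSpace ℝ (Fin n), ‖mulVecEr (1 - T) z‖ ≤ γ * ‖z‖) ∧
      mulVecEr B x - mulVecEr (1 - T) (mulVecEr B x - RQr B x • x) = y ∧
      ∃ v : Fin n → ℝ, v ≠ 0 ∧ T = 1 - γ • householder v := by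
  set r : EuclideanSpace ℝ (Fin n) := mulVecEr B x - RQr B x • x with hr_def
  set w : EuclideanSpace ℝ (Fin n) := mulVecEr B x - y with hw_def
  have hr0 : r ≠ 0 := sub_ne_zero.mpr hres
  have hnr : ‖r‖ ≠ 0 := norm_ne_zero_iff.mpr hr0
  have hnx : ‖x‖ ≠ 0 := norm_ne_zero_iff.mpr hx
  -- residual is orthogonal to x
  have hxr : (inner ℝ x r : ℝ) = 0 := by
    rw [hr_def, inner_sub_right, real_inner_smul_right, RQr, real_inner_self_eq_norm_sq]
    field_simp
    ring
  -- inner (Bx) r = ‖r‖^2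
  have hBx : mulVecEr B x = RQr B x • x + r := by rw [hr_def]; abel
  have hBr : (inner ℝ (mulVecEr B x) r : ℝ) = ‖r‖ ^ 2 := by
    rw [hBx, inner_add_left, real_inner_smul_left, hxr, real_inner_self_eq_norm_sq]; ring
  -- the vectors a, b
  set a : Fin n → ℝ := WithLp.equiv 2 (Fin n → ℝ) r with ha_def
  set b : Fin n → ℝ := γ⁻¹ • (WithLp.equiv 2 (Fin n → ℝ) w) with hb_def
  -- a ≠ b, else contradiction with horth
  have hab : a ≠ b := by
    intro h
    have hw : w = γ • r := by
      have : WithLp.equiv 2 (Fin n → ℝ) w = γ • (WithLp.equiv 2 (Fin n → ℝ) r) := by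
        have := congrArg (fun u => γ • u) h
        simpa [hb_def, ha_def, smul_smul, mul_inv_cancel₀ (ne_of_gt hγ0)] using this.symm
      have := congrArg (WithLp.equiv 2 (Fin n → ℝ)).symm this
      simpa using this
    have hy : y = mulVecEr B x - γ • r := by
      rw [← hw, hw_def]; abel
    rw [hy] at horth
    rw [hw] at horth
    rw [real_inner_smul_right, inner_sub_left, real_inner_smul_left, hBr,
      real_inner_self_eq_norm_sq] at horth
    have hrpos : 0 < ‖r‖ ^ 2 := by positivity
    nlinarith [mul_pos (mul_pos hγ0 (sub_pos.mpr hγ1)) hrpos]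
  -- equal dot-norms
  have hww : ‖w‖ = γ * ‖r‖ := hlen
  have hdots : dotProduct a a = dotProduct b b := by
    have h1 : dotProduct a a = ‖r‖ ^ 2 := (norm_sq_eq_dot r).symm
    have h2 : dotProduct b b
        = γ⁻¹ * (γ⁻¹ * (‖w‖ ^ 2)) := by
      rw [hb_def, smul_dotProduct, dotProduct_smul, smul_eq_mul, smul_eq_mul,
        ← norm_sq_eq_dot]
    rw [h1, h2, hww]
    field_simp
  set v : Fin n → ℝ := a - b with hv_def
  have hv : v ≠ 0 := sub_ne_zero.mpr hab
  have hrefl : (householder v).mulVec a = b := householder_reflect hab hdots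
  refine ⟨1 - γ • householder v, ?_, ?_, ?_, v, hv, rfl⟩
  · unfold Matrix.IsSymm
    rw [Matrix.transpose_sub, Matrix.transpose_one, Matrix.transpose_smul,
      householder_isSymm v]
  · intro z
    have h1 : (1 : Matrix (Fin n) (Fin n) ℝ) - (1 - γ • householder v) = γ • householder v := by
      abel
    rw [h1, mulVecEr_smul, norm_smul, Real.norm_eq_abs, abs_of_pos hγ0,
      householder_norm hv z]
  · have h1 : (1 : Matrix (Fin n) (Fin n) ℝ) - (1 - γ • householder v) = γ • householder v := by
      abel
    rw [h1, mulVecEr_smul]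
    have h2 : mulVecEr (householder v) r = γ⁻¹ • w := by
      show (WithLp.equiv 2 (Fin n → ℝ)).symm
        ((householder v).mulVec (WithLp.equiv 2 (Fin n → ℝ) r)) = γ⁻¹ • w
      rw [← ha_def, hrefl, hb_def]
      simp
    rw [h2, smul_smul, mul_inv_cancel₀ (ne_of_gt hγ0), one_smul, hw_def]
    abel
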